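/- Let p = 2n + 1 be an odd prime. In the polynomial ring (Z/pZ)[T_1, ..., T_n], the coefficient of the monomial T_1^{n−1} T_2^{n−1} ⋯ T_n^{n−1} in the square of the Vandermonde polynomial ∏_{1 ≤ i < j ≤ n} (T_i − T_j)^2 equals (−1)^{n(n−1)/2} · n!, which is nonzero modulo p. -/

import Mathlib

open Equiv Equiv.Perm

lemma revPerm_succ_eq (n : ℕ) :
    (Fin.revPerm : Perm (Fin (n+1))) =
      finRotate (n+1) *
        ((finSuccEquiv' (Fin.last n)).symm.permCongr
          ((Fin.revPerm : Perm (Fin n)).optionCongr)) := by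
  ext i
  refine Fin.lastCases ?_ ?_ i
  · simp [Equiv.permCongr_apply, finSuccEquiv'_at, finRotate_last]
  · intro j
    simp only [Equiv.Perm.mul_apply, Equiv.permCongr_apply, Equiv.symm_symm]
    rw [show (Fin.castSucc j) = (Fin.last n).succAbove j from (Fin.succAbove_last ▸ rfl),
      finSuccEquiv'_succAbove]
    simp only [Equiv.optionCongr_apply, Option.map_some, Fin.revPerm_apply]
    rw [show (finSuccEquiv' (Fin.last n)).symm (some j.rev) = (Fin.last n).succAbove j.rev from rfl]
    rw [Fin.succAbove_last]
    have hlt : (j.rev : ℕ) < n := j.rev.isLt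
    have h2 : j.rev.castSucc = (⟨(j.rev : ℕ), by omega⟩ : Fin (n+1)) := rfl
    rw [h2, finRotate_of_lt hlt]
    have hj := j.isLt
    simp [Fin.val_rev]
    omega

lemma sign_revPerm (n : ℕ) :
    Equiv.Perm.sign (Fin.revPerm : Perm (Fin n)) = (-1 : ℤˣ) ^ (n * (n - 1) / 2) := by
  induction n with
  | zero => simp [Subsingleton.elim (Fin.revPerm : Perm (Fin 0)) 1]
  | succ n ih =>
    rw [revPerm_succ_eq, map_mul, sign_finRotate, Equiv.Perm.sign_permCongr,
      Equiv.optionCongr_sign, ih, ← pow_add]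
    congr 1
    have h3 : ∀ m : ℕ, m * (m - 1) / 2 = ∑ i ∈ Finset.range m, i := by
      intro m
      have := Finset.sum_range_id_mul_two m
      omega
    rw [h3, h3, Finset.sum_range_succ]
    simp [Nat.add_comm]

open Equiv Equiv.Perm MvPolynomial Finset

-- helper: product of X^g equals a monomial
lemma prod_X_pow (R : Type*) [CommSemiring R] (n : ℕ) (g : Fin n → ℕ) :
    (∏ j : Fin n, (X j : MvPolynomial (Fin n) R) ^ g j)
      = monomial (Finsupp.equivFunOnFinite.symm g) 1 := by
  set s : Fin n →₀ ℕ := Finsupp.equivFunOnFinite.symm g with hs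
  have hg : ∀ j, g j = s j := by intro j; simp [hs]
  rw [← MvPolynomial.prod_X_pow_eq_monomial (s := s)]
  rw [← Finset.prod_subset (Finset.subset_univ s.support)]
  · exact Finset.prod_congr rfl fun j _ => by rw [hg]
  · intro x _ hx
    rw [hg, Finsupp.notMem_support_iff.mp hx, pow_zero]

lemma det_vdm_expand (R : Type*) [CommRing R] (n : ℕ) :
    (Matrix.vandermonde (fun i => (X i : MvPolynomial (Fin n) R))).det
      = ∑ σ : Perm (Fin n),
          monomial (Finsupp.equivFunOnFinite.symm fun j => ((σ⁻¹ j : Fin n) : ℕ))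
            (((Perm.sign σ : ℤ) : R)) := by
  rw [Matrix.det_apply]
  refine Finset.sum_congr rfl fun σ _ => ?_
  have h1 : ∏ i : Fin n, Matrix.vandermonde (fun i => (X i : MvPolynomial (Fin n) R)) (σ i) i
      = ∏ i : Fin n, (X i : MvPolynomial (Fin n) R) ^ ((σ⁻¹ i : Fin n) : ℕ) := by
    rw [← Equiv.prod_comp σ⁻¹ (fun i => Matrix.vandermonde (fun i => (X i : MvPolynomial (Fin n) R)) (σ i) i)]
    exact Finset.prod_congr rfl fun i _ => by simp [Matrix.vandermonde_apply]
  rw [h1, prod_X_pow]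
  rw [Units.smul_def, zsmul_eq_mul]
  rw [show ((((Perm.sign σ : ℤ) : MvPolynomial (Fin n) R))) = C (((Perm.sign σ : ℤ) : R)) by
    exact (map_intCast (C : R →+* MvPolynomial (Fin n) R) _).symm]
  rw [MvPolynomial.C_mul_monomial, mul_one]

theorem stmt_12 (n p : ℕ) (hp : p = 2 * n + 1) (hprime : p.Prime) :
    MvPolynomial.coeff (Finsupp.equivFunOnFinite.symm fun _ : Fin n => n - 1)
        (∏ i : Fin n, ∏ j ∈ Finset.Ioi i,
          (MvPolynomial.X i - MvPolynomial.X j : MvPolynomial (Fin n) (ZMod p)) ^ 2)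
      = (-1 : ZMod p) ^ (n * (n - 1) / 2) * (n.factorial : ZMod p) ∧
    (-1 : ZMod p) ^ (n * (n - 1) / 2) * (n.factorial : ZMod p) ≠ 0 := by
  haveI := Fact.mk hprime
  set m : Fin n →₀ ℕ := Finsupp.equivFunOnFinite.symm fun _ : Fin n => n - 1 with hm
  set c : Perm (Fin n) → ZMod p := fun σ => ((Perm.sign σ : ℤ) : ZMod p) with hc
  set E : Perm (Fin n) → (Fin n →₀ ℕ) :=
    fun σ => Finsupp.equivFunOnFinite.symm fun j => ((σ⁻¹ j : Fin n) : ℕ) with hE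
  constructor
  · have hprod : (∏ i : Fin n, ∏ j ∈ Finset.Ioi i,
        (X i - X j : MvPolynomial (Fin n) (ZMod p)) ^ 2)
        = (Matrix.vandermonde (fun i => (X i : MvPolynomial (Fin n) (ZMod p)))).det ^ 2 := by
      rw [Matrix.det_vandermonde, ← Finset.prod_pow]
      refine Finset.prod_congr rfl fun i _ => ?_
      rw [← Finset.prod_pow]
      exact Finset.prod_congr rfl fun j _ => by ring
    have hkey : ∀ σ τ : Perm (Fin n), (E σ + E τ = m ↔ τ = σ * Fin.revPerm) := by
      intro σ τ
      constructor
      · intro h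
        have h' : ∀ j, ((σ⁻¹ j : Fin n) : ℕ) + ((τ⁻¹ j : Fin n) : ℕ) = n - 1 := by
          intro j
          have := DFunLike.congr_fun h j
          simpa [hE, hm, Finsupp.add_apply] using this
        ext k
        have h2 := h' (τ k)
        rw [Perm.inv_def τ, Equiv.symm_apply_apply] at h2
        have h3 : σ⁻¹ (τ k) = Fin.rev k := by
          have hlt1 := (σ⁻¹ (τ k)).isLt
          have hlt2 := k.isLt
          apply Fin.val_injective
          rw [Fin.val_rev]
          omega
        have h4 := congrArg σ h3
        rw [Perm.inv_def, Equiv.apply_symm_apply] at h4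
        simp [Perm.mul_apply, h4]
      · rintro rfl
        ext j
        have hinv : (σ * (Fin.revPerm : Perm (Fin n)))⁻¹ j = Fin.rev (σ⁻¹ j) := by
          rw [mul_inv_rev, Perm.mul_apply,
            show (Fin.revPerm : Perm (Fin n))⁻¹ = Fin.revPerm by
              rw [Equiv.Perm.inv_def, Fin.revPerm_symm],
            Fin.revPerm_apply]
        have hlt1 := (σ⁻¹ j).isLt
        have hr : (Fin.revPerm : Perm (Fin n))⁻¹ = Fin.revPerm := by
          rw [Equiv.Perm.inv_def, Fin.revPerm_symm]
        rw [Perm.inv_def (σ * Fin.revPerm)] at hinv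
        simp [hE, hm, Finsupp.add_apply, hinv, hr, Fin.val_rev]
        omega
    rw [hprod, sq, det_vdm_expand, Finset.sum_mul_sum]
    simp only [MvPolynomial.monomial_mul]
    rw [MvPolynomial.coeff_sum]
    simp only [MvPolynomial.coeff_sum, MvPolynomial.coeff_monomial]
    have hstep : ∀ σ : Perm (Fin n),
        (∑ τ : Perm (Fin n), if E σ + E τ = m then c σ * c τ else 0)
          = c Fin.revPerm := by
      intro σ
      have : (∑ τ : Perm (Fin n), if E σ + E τ = m then c σ * c τ else 0)
          = ∑ τ : Perm (Fin n), if τ = σ * Fin.revPerm then c σ * c τ else 0 := by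
        refine Finset.sum_congr rfl fun τ _ => ?_
        rw [if_congr (hkey σ τ) rfl rfl]
      rw [this, Finset.sum_ite_eq' Finset.univ (σ * Fin.revPerm)
        (fun τ => c σ * c τ), if_pos (Finset.mem_univ _)]
      have hcm : c (σ * Fin.revPerm) = c σ * c Fin.revPerm := by
        simp [hc, ← Int.cast_mul]
      rw [hcm, ← mul_assoc]
      have hsq : c σ * c σ = 1 := by
        simp [hc, ← Int.cast_mul, ← Units.val_mul]
      rw [hsq, one_mul]
    rw [Finset.sum_congr rfl fun σ _ => hstep σ, Finset.sum_const, Finset.card_univ, Fintype.card_perm,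
      Fintype.card_fin, nsmul_eq_mul]
    have hcrev : c (Fin.revPerm : Perm (Fin n)) = (-1 : ZMod p) ^ (n * (n - 1) / 2) := by
      rw [hc]
      simp only [sign_revPerm]
      push_cast
      ring
    rw [hcrev, mul_comm]
  · intro h
    rcases mul_eq_zero.mp h with h1 | h2
    · exact pow_ne_zero _ (neg_ne_zero.mpr one_ne_zero) h1
    · have := (ZMod.natCast_eq_zero_iff _ _).mp h2
      have := (Nat.Prime.dvd_factorial hprime).mp this
      omega
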